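/- arXiv:0810.5533 — 7 statements merged into one kernel-verified Lean document; each statement's English description precedes it below -/
import Mathlib

section
/- Let G = (∏_{i=1}^n A_i) × ℤˡ where each A_i is a free group, and let ψ : G → G be a group homomorphism with ψ ∘ ψ = ψ whose range is a nonabelian free group (i.e., the range of ψ is isomorphic to a free group and contains two elements that do not commute). Then there exists an index r, 1 ≤ r ≤ n, such that ψ = ψ ∘ pr_r and, for every g ∈ G, pr_r(g) = 1 implies ψ(g) = 1. -/
/-- The projection of `G = (∏ i, FreeGroup (X i)) × ℤˡ` onto its `r`-th free-group coordinate: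
it keeps the `r`-th free-group coordinate and is trivial in every other coordinate
(including the `ℤˡ` coordinate). -/
def pr {n l : ℕ} {X : Fin n → Type} (r : Fin n) :
    ((∀ i : Fin n, FreeGroup (X i)) × Multiplicative (Fin l → ℤ)) →*
      ((∀ i : Fin n, FreeGroup (X i)) × Multiplicative (Fin l → ℤ)) :=
  ((MonoidHom.mulSingle (fun i : Fin n => FreeGroup (X i)) r).comp
      ((Pi.evalMonoidHom (fun i : Fin n => FreeGroup (X i)) r).comp
        (MonoidHom.fst _ _))).prod 1


private lemma reduce_cons_of_ne {β : Type*} [DecidableEq β] {L : List (β × Bool)} {z t : β}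
    {b s : Bool} {tl : List (β × Bool)}
    (h : FreeGroup.reduce L = L) (hL : L = (z, b) :: tl) (hts : t ≠ z) :
    FreeGroup.reduce ((t, s) :: L) = (t, s) :: L := by
  subst hL
  rw [FreeGroup.reduce.cons, h]
  simp [hts]

private lemma not_commute_of_head_ne {β : Type*} [DecidableEq β] {c : FreeGroup β} {t z : β}
    {b : Bool} {tl : List (β × Bool)} (hL : c.toWord = (z, b) :: tl) (hzt : z ≠ t) :
    ¬ Commute c (FreeGroup.of t) := by
  intro hcomm
  have hred : FreeGroup.reduce c.toWord = c.toWord := FreeGroup.reduce_toWord c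
  have hA : (FreeGroup.of t * c).toWord = (t, true) :: c.toWord := by
    conv_lhs => rw [← FreeGroup.mk_toWord (x := c),
      show FreeGroup.of t = FreeGroup.mk [(t, true)] from rfl, FreeGroup.mul_mk]
    rw [FreeGroup.toWord_mk, List.singleton_append, reduce_cons_of_ne hred hL (Ne.symm hzt)]
  have hX : ((FreeGroup.of t * c)⁻¹).toWord
      = FreeGroup.invRev c.toWord ++ [(t, false)] := by
    rw [FreeGroup.toWord_inv, hA]
    simp [FreeGroup.invRev]
  have hY : ((c * FreeGroup.of t)⁻¹).toWord
      = FreeGroup.reduce ((t, false) :: FreeGroup.invRev c.toWord) := by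
    rw [mul_inv_rev, show (FreeGroup.of t)⁻¹ = FreeGroup.mk [(t, false)] from rfl,
      ← FreeGroup.mk_toWord (x := c⁻¹), FreeGroup.toWord_inv, FreeGroup.mul_mk,
      FreeGroup.toWord_mk, List.singleton_append]
  have hinvred : FreeGroup.reduce (FreeGroup.invRev c.toWord) = FreeGroup.invRev c.toWord := by
    rw [FreeGroup.reduce_invRev, hred]
  have hEne : FreeGroup.invRev c.toWord ≠ [] := by
    intro h
    have := congrArg List.length h
    rw [FreeGroup.invRev_length, hL] at this
    simp at this
  obtain ⟨hd', tl'', hcons⟩ := List.exists_cons_of_ne_nil hEne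
  have hE : FreeGroup.reduce ((t, false) :: FreeGroup.invRev c.toWord)
      = FreeGroup.invRev c.toWord ++ [(t, false)] := by
    rw [← hY, ← hX, hcomm.eq]
  rw [FreeGroup.reduce.cons, hinvred, hcons] at hE
  dsimp only at hE
  by_cases hif : t = hd'.1 ∧ false = !hd'.2
  · rw [if_pos hif] at hE
    have := congrArg List.length hE
    simp [hcons] at this
    omega
  · rw [if_neg hif, ← hcons] at hE
    -- hE : (t, false) :: invRev c.toWord = invRev c.toWord ++ [(t, false)]
    have hsnoc : FreeGroup.invRev c.toWord = FreeGroup.invRev tl ++ [(z, !b)] := by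
      rw [hL]; simp [FreeGroup.invRev]
    rw [hsnoc] at hE
    have h1 : ((t, false) :: (FreeGroup.invRev tl ++ [(z, !b)])).getLast? = some (z, !b) := by
      rw [show (t, false) :: (FreeGroup.invRev tl ++ [(z, !b)])
          = ((t, false) :: FreeGroup.invRev tl) ++ [(z, !b)] from rfl]
      exact List.getLast?_concat
    have h2 : ((FreeGroup.invRev tl ++ [(z, !b)]) ++ [(t, false)]).getLast? = some (t, false) :=
      List.getLast?_concat
    rw [hE, h2] at h1
    injection h1 with h1'
    exact hzt (congrArg Prod.fst h1'.symm)

private lemma eq_one_of_commute_two {β : Type*} [DecidableEq β] {c : FreeGroup β} {x y : β}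
    (hxy : x ≠ y) (hx : Commute c (FreeGroup.of x)) (hy : Commute c (FreeGroup.of y)) :
    c = 1 := by
  by_contra hc
  obtain ⟨⟨z, b⟩, tl, hL⟩ :=
    List.exists_cons_of_ne_nil (mt FreeGroup.toWord_eq_nil_iff.mp hc)
  rcases eq_or_ne z x with rfl | hzx
  · exact not_commute_of_head_ne hL hxy hy
  · exact not_commute_of_head_ne hL hzx hx


private lemma freeGroup_comm_of_subsingleton {T : Type*} (hT : ∀ p q : T, p = q)
    (x y : FreeGroup T) : Commute x y := by
  rcases isEmpty_or_nonempty T with h | ⟨⟨d⟩⟩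
  · have hone : ∀ z : FreeGroup T, z = 1 := by
      intro z
      rcases hzz : z.toWord with _ | ⟨a, _⟩
      · exact FreeGroup.toWord_eq_nil_iff.mp hzz
      · exact (h.false a.1).elim
    rw [hone x, hone y]
  · have hz : ∀ z : FreeGroup T, z ∈ Subgroup.zpowers (FreeGroup.of d) := by
      intro z
      induction z using FreeGroup.induction_on with
      | C1 => exact Subgroup.one_mem _
      | of p => rw [show p = d from hT p d]; exact Subgroup.mem_zpowers _
      | inv_of p ih => exact Subgroup.inv_mem _ ih
      | mul p q hp hq => exact Subgroup.mul_mem _ hp hq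
    obtain ⟨mx, hmx⟩ := Subgroup.mem_zpowers_iff.mp (hz x)
    obtain ⟨my, hmy⟩ := Subgroup.mem_zpowers_iff.mp (hz y)
    rw [← hmx, ← hmy]
    exact (Commute.refl _).zpow_zpow _ _

private lemma free_comm_trans {β : Type} {u v w : FreeGroup β}
    (huv : Commute u v) (huw : Commute u w) (hvw : ¬ Commute v w) : u = 1 := by
  classical
  by_contra hu
  set K := Subgroup.closure ({u, v, w} : Set (FreeGroup β)) with hK
  have hle : K ≤ Subgroup.centralizer {u} := by
    rw [hK, Subgroup.closure_le]
    rintro g (rfl | rfl | rfl) <;> rw [SetLike.mem_coe, Subgroup.mem_centralizer_iff] <;>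
      rintro h ⟨rfl⟩
    · rfl
    · exact huv
    · exact huw
  have hu' : u ∈ K := Subgroup.subset_closure (by simp)
  have hv' : v ∈ K := Subgroup.subset_closure (by simp)
  have hw' : w ∈ K := Subgroup.subset_closure (by simp)
  set U : K := ⟨u, hu'⟩
  set V : K := ⟨v, hv'⟩
  set W : K := ⟨w, hw'⟩
  have hUcent : ∀ k : K, Commute U k := by
    intro k
    have h1 : u * (k : FreeGroup β) = (k : FreeGroup β) * u :=
      Subgroup.mem_centralizer_iff.mp (hle k.2) u rfl
    exact Subtype.ext h1
  let e : K ≃* FreeGroup (IsFreeGroup.Generators K) := IsFreeGroup.toFreeGroup K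
  have hcentral : ∀ m : FreeGroup (IsFreeGroup.Generators K), Commute (e U) m := by
    intro m
    have h1 : Commute U (e.symm m) := hUcent _
    have h2 := h1.map e.toMonoidHom
    simpa using h2
  by_cases hT : ∀ p q : IsFreeGroup.Generators K, p = q
  · have h1 : Commute (e V) (e W) := freeGroup_comm_of_subsingleton hT _ _
    have h2 : Commute V W := by
      have := h1.map e.symm.toMonoidHom
      simpa using this
    have h3 : Commute v w := by
      have := h2.map K.subtype
      exact this
    exact hvw h3
  · push_neg at hT
    obtain ⟨p, q, hpq⟩ := hT
    have h1 : e U = 1 :=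
      eq_one_of_commute_two hpq (hcentral _) (hcentral _)
    have h2 : U = 1 := by
      have := congrArg e.symm h1
      simpa using this
    exact hu (by simpa [U] using congrArg (Subtype.val) h2)

/-- If `ψ` is an idempotent endomorphism of `G = (∏ i, FreeGroup (X i)) × ℤˡ` whose range is a
nonabelian free group, then there is an index `r` such that `ψ = ψ ∘ pr_r` and `pr_r g = 1`
implies `ψ g = 1`. -/
theorem exists_coordinate_of_projection_onto_free
    (n l : ℕ) (X : Fin n → Type)
    (ψ : ((∀ i : Fin n, FreeGroup (X i)) × Multiplicative (Fin l → ℤ)) →*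
      ((∀ i : Fin n, FreeGroup (X i)) × Multiplicative (Fin l → ℤ)))
    (hproj : ψ.comp ψ = ψ)
    (hfree : ∃ β : Type, Nonempty (ψ.range ≃* FreeGroup β))
    (hnonab : ∃ a ∈ ψ.range, ∃ b ∈ ψ.range, a * b ≠ b * a) :
    ∃ r : Fin n, ψ = ψ.comp (pr r) ∧ ∀ g, pr r g = 1 → ψ g = 1 := by
  classical
  have hpr : ∀ (r : Fin n) (g : (∀ i : Fin n, FreeGroup (X i)) × Multiplicative (Fin l → ℤ)),
      pr (l := l) (X := X) r g = (Pi.mulSingle r (g.1 r), 1) := fun r g => rfl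
  -- decomposition of any element
  have hdecomp : ∀ g : (∀ i : Fin n, FreeGroup (X i)) × Multiplicative (Fin l → ℤ),
      ((List.finRange n).map fun i => pr (l := l) (X := X) i g).prod
        * ((1 : ∀ i : Fin n, FreeGroup (X i)), g.2) = g := by
    intro g
    have h1 : (((List.finRange n).map fun i => pr (l := l) (X := X) i g).prod).1 = g.1 := by
      funext j
      have h2 := map_list_prod
        ((Pi.evalMonoidHom (fun i : Fin n => FreeGroup (X i)) j).comp
          (MonoidHom.fst _ _))
        ((List.finRange n).map fun i => pr (l := l) (X := X) i g)
      rw [List.map_map] at h2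
      have h3 : (((Pi.evalMonoidHom (fun i : Fin n => FreeGroup (X i)) j).comp
            (MonoidHom.fst _ _)) ∘ fun i => pr (l := l) (X := X) i g)
          = fun i => Pi.mulSingle (M := fun i : Fin n => FreeGroup (X i)) i (g.1 i) j := rfl
      rw [h3] at h2
      have h4 : ((List.finRange n).map
          fun i => Pi.mulSingle (M := fun i : Fin n => FreeGroup (X i)) i (g.1 i) j).prod
          = Pi.mulSingle (M := fun i : Fin n => FreeGroup (X i)) j (g.1 j) j
            ^ (List.finRange n).count j := by
        refine List.prod_map_eq_pow_single j _ fun i hij _ => ?_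
        exact Pi.mulSingle_eq_of_ne (Ne.symm hij) _
      rw [h4, List.count_eq_one_of_mem (List.nodup_finRange n) (List.mem_finRange j),
        pow_one, Pi.mulSingle_eq_same] at h2
      exact h2
    have h5 : (((List.finRange n).map fun i => pr (l := l) (X := X) i g).prod).2 = 1 := by
      have h6 := map_list_prod (MonoidHom.snd (∀ i : Fin n, FreeGroup (X i))
        (Multiplicative (Fin l → ℤ)))
        ((List.finRange n).map fun i => pr (l := l) (X := X) i g)
      rw [List.map_map] at h6
      have h7 : ((MonoidHom.snd (∀ i : Fin n, FreeGroup (X i)) (Multiplicative (Fin l → ℤ)))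
          ∘ fun i => pr (l := l) (X := X) i g)
          = fun _ => (1 : Multiplicative (Fin l → ℤ)) := rfl
      rw [h7] at h6
      simpa using h6
    refine Prod.ext ?_ ?_
    · rw [Prod.fst_mul, h1]; exact mul_one _
    · rw [Prod.snd_mul, h5]; exact one_mul _
  have hψdecomp : ∀ g : (∀ i : Fin n, FreeGroup (X i)) × Multiplicative (Fin l → ℤ),
      ψ g = ((List.finRange n).map fun i => ψ (pr (l := l) (X := X) i g)).prod
        * ψ ((1 : ∀ i : Fin n, FreeGroup (X i)), g.2) := by
    intro g
    conv_lhs => rw [← hdecomp g]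
    rw [map_mul, map_list_prod, List.map_map]
    rfl
  -- commutation facts
  have hcommpr : ∀ (i j : Fin n), i ≠ j →
      ∀ g h : (∀ i : Fin n, FreeGroup (X i)) × Multiplicative (Fin l → ℤ),
      Commute (ψ (pr (l := l) (X := X) i g)) (ψ (pr (l := l) (X := X) j h)) := by
    intro i j hij g h
    refine Commute.map ?_ ψ
    rw [hpr, hpr]
    exact Commute.prod (Pi.mulSingle_commute hij _ _) (Commute.refl _)
  have hcent : ∀ (z : Multiplicative (Fin l → ℤ))
      (g : (∀ i : Fin n, FreeGroup (X i)) × Multiplicative (Fin l → ℤ)),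
      Commute (ψ ((1 : ∀ i : Fin n, FreeGroup (X i)), z)) (ψ g) := by
    intro z g
    refine Commute.map ?_ ψ
    exact Commute.prod (Commute.one_left _) (Commute.all _ _)
  obtain ⟨a, ha, b, hb, hab⟩ := hnonab
  obtain ⟨a₀, rfl⟩ := ha
  obtain ⟨b₀, rfl⟩ := hb
  -- find the key coordinate
  have step : ∃ r : Fin n, ¬ Commute (ψ (pr (l := l) (X := X) r a₀))
      (ψ (pr (l := l) (X := X) r b₀)) := by
    by_contra hall
    push_neg at hall
    apply hab
    have : Commute (ψ a₀) (ψ b₀) := by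
      rw [hψdecomp a₀, hψdecomp b₀]
      have hmem : ∀ (x : (∀ i : Fin n, FreeGroup (X i)) × Multiplicative (Fin l → ℤ))
          (u : _), u ∈ (List.finRange n).map (fun i => ψ (pr (l := l) (X := X) i x)) →
          ∃ i : Fin n, u = ψ (pr (l := l) (X := X) i x) := by
        intro x u hu
        obtain ⟨i, _, rfl⟩ := List.mem_map.mp hu
        exact ⟨i, rfl⟩
      refine Commute.mul_left ?_ ?_
      · refine Commute.list_prod_left _ _ fun u hu => ?_
        obtain ⟨i, rfl⟩ := hmem a₀ u hu
        refine Commute.mul_right ?_ ?_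
        · refine Commute.list_prod_right _ _ fun v hv => ?_
          obtain ⟨j, rfl⟩ := hmem b₀ v hv
          rcases eq_or_ne i j with rfl | hij
          · exact hall i
          · exact hcommpr i j hij _ _
        · exact (hcent b₀.2 _).symm
      · refine Commute.mul_right ?_ ?_
        · refine Commute.list_prod_right _ _ fun v hv => ?_
          obtain ⟨j, rfl⟩ := hmem b₀ v hv
          exact hcent a₀.2 _
        · exact hcent a₀.2 _
    exact this
  obtain ⟨r, hr⟩ := step
  -- the killer lemma
  obtain ⟨β, ⟨e⟩⟩ := hfree
  have killer : ∀ u, (hu : u ∈ ψ.range) →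
      Commute u (ψ (pr (l := l) (X := X) r a₀)) →
      Commute u (ψ (pr (l := l) (X := X) r b₀)) → u = 1 := by
    intro u hu h1 h2
    have hva : ψ (pr (l := l) (X := X) r a₀) ∈ ψ.range := ⟨_, rfl⟩
    have hvb : ψ (pr (l := l) (X := X) r b₀) ∈ ψ.range := ⟨_, rfl⟩
    have c1 : Commute (⟨u, hu⟩ : ψ.range) ⟨_, hva⟩ := Subtype.ext h1
    have c2 : Commute (⟨u, hu⟩ : ψ.range) ⟨_, hvb⟩ := Subtype.ext h2
    have c3 : ¬ Commute (e ⟨_, hva⟩) (e ⟨_, hvb⟩) := by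
      intro hcc
      apply hr
      have := hcc.map e.symm.toMonoidHom
      simp only [MulEquiv.coe_toMonoidHom, MulEquiv.symm_apply_apply] at this
      have := this.map ψ.range.subtype
      simpa using this
    have h4 : e ⟨u, hu⟩ = 1 :=
      free_comm_trans (c1.map e.toMonoidHom) (c2.map e.toMonoidHom) c3
    have h5 : (⟨u, hu⟩ : ψ.range) = 1 := by
      have := congrArg e.symm h4
      simpa using this
    simpa using congrArg Subtype.val h5
  have hkill_s : ∀ s : Fin n, s ≠ r →
      ∀ g : (∀ i : Fin n, FreeGroup (X i)) × Multiplicative (Fin l → ℤ),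
      ψ (pr (l := l) (X := X) s g) = 1 := by
    intro s hs g
    exact killer _ ⟨_, rfl⟩ (hcommpr s r hs g a₀) (hcommpr s r hs g b₀)
  have hkill_z : ∀ z : Multiplicative (Fin l → ℤ),
      ψ ((1 : ∀ i : Fin n, FreeGroup (X i)), z) = 1 := by
    intro z
    exact killer _ ⟨_, rfl⟩ (hcent z _) (hcent z _)
  have hfinal : ∀ g : (∀ i : Fin n, FreeGroup (X i)) × Multiplicative (Fin l → ℤ),
      ψ g = ψ (pr (l := l) (X := X) r g) := by
    intro g
    rw [hψdecomp g, hkill_z g.2, mul_one]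
    have h4 : ((List.finRange n).map fun i => ψ (pr (l := l) (X := X) i g)).prod
        = ψ (pr (l := l) (X := X) r g) ^ (List.finRange n).count r := by
      refine List.prod_map_eq_pow_single r _ fun s hs _ => hkill_s s hs g
    rw [h4, List.count_eq_one_of_mem (List.nodup_finRange n) (List.mem_finRange r), pow_one]
  exact ⟨r, MonoidHom.ext fun g => hfinal g, fun g hg => by rw [hfinal g, hg, map_one]⟩
end

section
/- Let G = (∏_{i=1}^n A_i) × ℤˡ where each A_i is a finitely generated free group, and let ψ : G → G be a group homomorphism with ψ ∘ ψ = ψ whose range is a nonabelian free group freely generated by elements y₁, …, y_k. Let r be an index such that ψ = ψ ∘ pr_r and pr_r(g) = 1 implies ψ(g) = 1 for all g (such an r exists). Then there exist finitely many elements z₁, …, z_m (m ≥ 0) of the r-th factor subgroup A_r such that ψ(z_i) = 1 for each i, and the set {pr_r(y₁), …, pr_r(y_k), z₁, …, z_m} generates A_r. -/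
lemma FreeGroupBasis.closure_range {ι G : Type*} [Group G] (b : FreeGroupBasis ι G) :
    Subgroup.closure (Set.range b) = ⊤ := by
  have h : Set.range b = (b.repr.symm : FreeGroup ι →* G) '' Set.range FreeGroup.of := by
    ext g
    simp only [Set.mem_image, Set.mem_range]
    constructor
    · rintro ⟨i, rfl⟩
      exact ⟨FreeGroup.of i, ⟨i, rfl⟩, by
        rw [← b.repr_apply_coe i]; exact b.repr.symm_apply_apply (b i)⟩
    · rintro ⟨w, ⟨i, rfl⟩, rfl⟩
      exact ⟨i, by rw [← b.repr_apply_coe i]; exact (b.repr.symm_apply_apply (b i)).symm⟩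
  rw [h, ← MonoidHom.map_closure, FreeGroup.closure_range_of,
    Subgroup.map_top_of_surjective]
  exact b.repr.symm.surjective


/-- Let `ψ` be an idempotent endomorphism of `G = (∏ i, FreeGroup (X i)) × ℤˡ` (with each
`X i` finite) whose range is a nonabelian free group freely generated by `y₁, …, y_k`, and let
`r` be an index with `ψ = ψ ∘ pr_r` and such that `pr_r g = 1` implies `ψ g = 1`. Then there
are finitely many elements `z₁, …, z_m` of the `r`-th factor subgroup `A_r = range (pr_r)` with
`ψ (z i) = 1` such that `{pr_r y₁, …, pr_r y_k, z₁, …, z_m}` generates `A_r`. -/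
theorem exists_generators_of_factor_of_projection_onto_free
    (n l : ℕ) (X : Fin n → Type) [∀ i, Finite (X i)]
    (ψ : ((∀ i : Fin n, FreeGroup (X i)) × Multiplicative (Fin l → ℤ)) →*
      ((∀ i : Fin n, FreeGroup (X i)) × Multiplicative (Fin l → ℤ)))
    (hproj : ψ.comp ψ = ψ)
    (k : ℕ) (y : Fin k → ((∀ i : Fin n, FreeGroup (X i)) × Multiplicative (Fin l → ℤ)))
    (b : FreeGroupBasis (Fin k) ψ.range) (hb : ∀ i : Fin k, ((b i : ψ.range) : _) = y i)
    (hnonab : ∃ a ∈ ψ.range, ∃ c ∈ ψ.range, a * c ≠ c * a)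
    (r : Fin n) (hr₁ : ψ = ψ.comp (pr r)) (hr₂ : ∀ g, pr r g = 1 → ψ g = 1) :
    ∃ (m : ℕ) (z : Fin m → ((∀ i : Fin n, FreeGroup (X i)) × Multiplicative (Fin l → ℤ))),
      (∀ i : Fin m, z i ∈ (pr r).range) ∧
      (∀ i : Fin m, ψ (z i) = 1) ∧
      Subgroup.closure (Set.range (fun i : Fin k => pr r (y i)) ∪ Set.range z) =
        (pr (X := X) (l := l) r).range := by
  classical
  haveI : Fintype (X r) := Fintype.ofFinite _
  -- the embedding of `FreeGroup (X r)` as the `r`-th factor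
  set J : FreeGroup (X r) →* ((∀ i : Fin n, FreeGroup (X i)) × Multiplicative (Fin l → ℤ)) :=
    (MonoidHom.mulSingle (fun i : Fin n => FreeGroup (X i)) r).prod 1 with hJdef
  have hprJ : ∀ g : ((∀ i : Fin n, FreeGroup (X i)) × Multiplicative (Fin l → ℤ)),
      pr r g = J (g.1 r) := fun g => rfl
  have hJfix : ∀ w, pr r (J w) = J w := by
    intro w
    rw [hprJ]
    congr 1
    exact Pi.mulSingle_eq_same (M := fun i : Fin n => FreeGroup (X i)) r w
  -- range of pr r equals range of J
  have hrange : J.range = (pr r).range := by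
    ext g
    constructor
    · rintro ⟨w, rfl⟩; exact ⟨J w, hJfix w⟩
    · rintro ⟨g, rfl⟩; exact ⟨g.1 r, (hprJ g).symm⟩
  -- elements of range ψ are fixed by ψ
  have hfix : ∀ g ∈ ψ.range, ψ g = g := by
    rintro g ⟨x, rfl⟩
    simpa using DFunLike.congr_fun hproj x
  have hy : ∀ i, ψ (y i) = y i := fun i => hfix _ (by rw [← hb i]; exact (b i).2)
  have hψpr : ∀ i, ψ (pr r (y i)) = y i := by
    intro i
    conv_rhs => rw [← hy i, hr₁]
    rfl
  -- closure of the y's is range ψ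
  have hcly : Subgroup.closure (Set.range y) = ψ.range := by
    have := b.closure_range
    have h2 : Subgroup.map ψ.range.subtype (Subgroup.closure (Set.range b)) = ψ.range := by
      rw [this, ← MonoidHom.range_eq_map, Subgroup.range_subtype]
    rw [MonoidHom.map_closure] at h2
    convert h2 using 3
    ext g
    simp only [Set.mem_range, Set.mem_image]
    constructor
    · rintro ⟨i, rfl⟩; exact ⟨b i, ⟨i, rfl⟩, hb i⟩
    · rintro ⟨w, ⟨i, rfl⟩, rfl⟩; exact ⟨i, (hb i).symm⟩
  -- H := closure of the pr r (y i)
  set H : Subgroup ((∀ i : Fin n, FreeGroup (X i)) × Multiplicative (Fin l → ℤ)) := Subgroup.closure (Set.range fun i => pr r (y i)) with hHdef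
  have hHle : H ≤ (pr r).range := by
    apply Subgroup.closure_le _ |>.2
    rintro g ⟨i, rfl⟩
    exact ⟨y i, rfl⟩
  have hmapH : Subgroup.map ψ H = ψ.range := by
    rw [hHdef, MonoidHom.map_closure, ← hcly]
    congr 1
    ext g
    simp only [Set.mem_image, Set.mem_range]
    constructor
    · rintro ⟨w, ⟨i, rfl⟩, rfl⟩; exact ⟨i, (hψpr i).symm⟩
    · rintro ⟨i, rfl⟩; exact ⟨pr r (y i), ⟨i, rfl⟩, hψpr i⟩
  -- generators of the r-th factor
  set m := Fintype.card (X r)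
  set e : Fin m ≃ X r := (Fintype.equivFin (X r)).symm
  set a : Fin m → ((∀ i : Fin n, FreeGroup (X i)) × Multiplicative (Fin l → ℤ)) := fun j => J (FreeGroup.of (e j)) with hadef
  have hcla : Subgroup.closure (Set.range a) = (pr r).range := by
    rw [← hrange, MonoidHom.range_eq_map, ← FreeGroup.closure_range_of,
      MonoidHom.map_closure]
    congr 1
    ext g
    simp only [Set.mem_range, Set.mem_image, hadef]
    constructor
    · rintro ⟨j, rfl⟩; exact ⟨FreeGroup.of (e j), ⟨e j, rfl⟩, rfl⟩
    · rintro ⟨w, ⟨x, rfl⟩, rfl⟩; exact ⟨e.symm x, by rw [e.apply_symm_apply]⟩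
  -- choose w j ∈ H with ψ (w j) = ψ (a j)
  have hex : ∀ j : Fin m, ∃ w ∈ H, ψ w = ψ (a j) := by
    intro j
    have : ψ (a j) ∈ Subgroup.map ψ H := by
      rw [hmapH]; exact ⟨a j, rfl⟩
    obtain ⟨w, hw, hw2⟩ := this
    exact ⟨w, hw, hw2⟩
  choose w hwH hwψ using hex
  refine ⟨m, fun j => a j * (w j)⁻¹, ?_, ?_, ?_⟩
  · intro j
    exact Subgroup.mul_mem _ (hrange ▸ ⟨FreeGroup.of (e j), rfl⟩)
      (Subgroup.inv_mem _ (hHle (hwH j)))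
  · intro j
    rw [map_mul, map_inv, hwψ, mul_inv_cancel]
  · apply le_antisymm
    · apply Subgroup.closure_le _ |>.2
      rintro g (⟨i, rfl⟩ | ⟨j, rfl⟩)
      · exact ⟨y i, rfl⟩
      · exact Subgroup.mul_mem _ (hrange ▸ ⟨FreeGroup.of (e j), rfl⟩)
          (Subgroup.inv_mem _ (hHle (hwH j)))
    · rw [← hcla]
      apply Subgroup.closure_le _ |>.2
      rintro g ⟨j, rfl⟩
      have h1 : a j * (w j)⁻¹ ∈
          Subgroup.closure (Set.range (fun i : Fin k => pr r (y i)) ∪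
            Set.range (fun j => a j * (w j)⁻¹)) :=
        Subgroup.subset_closure (Set.mem_union_right _ ⟨j, rfl⟩)
      have h2 : w j ∈
          Subgroup.closure (Set.range (fun i : Fin k => pr r (y i)) ∪
            Set.range (fun j => a j * (w j)⁻¹)) :=
        Subgroup.closure_mono Set.subset_union_left (hwH j)
      have := Subgroup.mul_mem _ h1 h2
      simpa using this
end

section
/- Every surjective group homomorphism from a finitely generated free group to itself is an isomorphism. Concretely: for any n ∈ ℕ, every surjective group homomorphism φ : FreeGroup (Fin n) → FreeGroup (Fin n) is injective (hence bijective). -/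
open FreeGroup

lemma reduced_no_adj {α : Type*} [DecidableEq α] {L : List (α × Bool)}
    (hL : FreeGroup.reduce L = L) {j : ℕ} (hj1 : j + 1 < L.length) {a : α} {c : Bool}
    (h1 : L.get ⟨j, by omega⟩ = (a, c)) (h2 : L.get ⟨j + 1, hj1⟩ = (a, !c)) : False := by
  apply FreeGroup.reduce.not (L₁ := L) (L₂ := L.take j) (L₃ := L.drop (j + 2)) (x := a) (b := c)
  rw [hL]
  conv_lhs => rw [← List.take_append_drop j L]
  congr 1
  rw [List.drop_eq_getElem_cons (i := j) (l := L) (by omega),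
      List.drop_eq_getElem_cons (i := j + 1) (l := L) (by omega)]
  rw [show L[j] = (a,c) from h1, show L[j+1] = (a,!c) from h2]

/-- Residual finiteness of finitely generated free groups, concrete version. -/
lemma freeGroup_res_finite (n : ℕ) (w : FreeGroup (Fin n)) (hw : w ≠ 1) :
    ∃ (m : ℕ) (π : FreeGroup (Fin n) →* Equiv.Perm (Fin (m + 1))), π w ≠ 1 := by
  classical
  set L : List (Fin n × Bool) := w.toWord with hLdef
  have hLred : FreeGroup.reduce L = L := FreeGroup.reduce_toWord w
  set m : ℕ := L.length with hmdef
  have hm : 0 < m := by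
    rw [hmdef]
    have : L ≠ [] := fun h => hw (FreeGroup.toWord_eq_nil_iff.mp h)
    exact List.length_pos_iff.mpr this
  refine ⟨m, ?_⟩
  -- the source predicate for generator a
  set P : Fin n → Fin (m + 1) → Prop := fun a k =>
    ∃ j, ∃ hj : j < m, (L.get ⟨j, hj⟩ = (a, true) ∧ (k : ℕ) = m - 1 - j) ∨
      (L.get ⟨j, hj⟩ = (a, false) ∧ (k : ℕ) = m - j) with hP
  set Q : Fin n → Fin (m + 1) → Prop := fun a k =>
    ∃ j, ∃ hj : j < m, (L.get ⟨j, hj⟩ = (a, true) ∧ (k : ℕ) = m - j) ∨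
      (L.get ⟨j, hj⟩ = (a, false) ∧ (k : ℕ) = m - 1 - j) with hQ
  -- the raw function
  set f : Fin n → Fin (m + 1) → Fin (m + 1) := fun a k =>
    if h : ∃ j, ∃ hj : j < m, L.get ⟨j, hj⟩ = (a, true) ∧ (k : ℕ) = m - 1 - j then
      ⟨(k : ℕ) + 1, by obtain ⟨j, hj, _, hk⟩ := h; omega⟩
    else ⟨(k : ℕ) - 1, by omega⟩ with hf
  -- specification of f on sources
  have hf_true : ∀ a j (hj : j < m) (k : Fin (m + 1)), L.get ⟨j, hj⟩ = (a, true) →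
      (k : ℕ) = m - 1 - j → (f a k : ℕ) = m - j := by
    intro a j hj k hget hk
    simp only [hf]
    rw [dif_pos ⟨j, hj, hget, hk⟩]
    simp only [Fin.val_mk]
    omega
  have hf_false : ∀ a j (hj : j < m) (k : Fin (m + 1)), L.get ⟨j, hj⟩ = (a, false) →
      (k : ℕ) = m - j → (f a k : ℕ) = m - 1 - j := by
    intro a j hj k hget hk
    simp only [hf]
    split_ifs with hcond
    · exfalso
      obtain ⟨j', hj', hget', hk'⟩ := hcond
      -- k = m - j = m - 1 - j', so j' = j - 1 and j ≥ 1
      have hjj : j' = j - 1 ∧ 1 ≤ j := by omega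
      obtain ⟨rfl, h1j⟩ := hjj
      exact reduced_no_adj hLred (j := j - 1) (by omega) (a := a) (c := true)
        (by convert hget' using 2)
        (by simp only [Bool.not_true]; convert hget using 2; exact Fin.ext (by simp only [Fin.val_mk]; omega))
    · simp only [Fin.val_mk]
      omega
  -- f maps P into Q
  have hfQ : ∀ a (k : Fin (m + 1)), P a k → Q a (f a k) := by
    rintro a k ⟨j, hj, h | h⟩
    · exact ⟨j, hj, Or.inl ⟨h.1, hf_true a j hj k h.1 h.2⟩⟩
    · exact ⟨j, hj, Or.inr ⟨h.1, hf_false a j hj k h.1 h.2⟩⟩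
  -- injectivity on P
  have hinj : ∀ a (k k' : Fin (m + 1)), P a k → P a k' → f a k = f a k' → k = k' := by
    rintro a k k' ⟨j, hj, hcase⟩ ⟨j', hj', hcase'⟩ heq
    have hv : (f a k : ℕ) = (f a k' : ℕ) := by rw [heq]
    rcases hcase with ⟨hg, hk⟩ | ⟨hg, hk⟩ <;> rcases hcase' with ⟨hg', hk'⟩ | ⟨hg', hk'⟩
    · rw [hf_true a j hj k hg hk, hf_true a j' hj' k' hg' hk'] at hv
      have : j = j' := by omega
      subst this; exact Fin.ext (by omega)
    · rw [hf_true a j hj k hg hk, hf_false a j' hj' k' hg' hk'] at hv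
      have hjj : j = j' + 1 → False := by
        intro h; subst h
        exact reduced_no_adj hLred (j := j') (by omega) (a := a) (c := false) hg' (by simpa using hg)
      have : j' = j - 1 ∧ 1 ≤ j := by omega
      exact absurd (by omega : j = j' + 1) (fun h => (hjj h).elim)
    · rw [hf_false a j hj k hg hk, hf_true a j' hj' k' hg' hk'] at hv
      have hjj : j' = j + 1 → False := by
        intro h; subst h
        exact reduced_no_adj hLred (j := j) (by omega) (a := a) (c := false) hg (by simpa using hg')
      exact absurd (by omega : j' = j + 1) (fun h => (hjj h).elim)
    · rw [hf_false a j hj k hg hk, hf_false a j' hj' k' hg' hk'] at hv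
      have : j = j' := by omega
      subst this; exact Fin.ext (by omega)
  -- surjectivity onto Q
  have hsurjQ : ∀ a (t : Fin (m + 1)), Q a t → ∃ k, P a k ∧ f a k = t := by
    rintro a t ⟨j, hj, ⟨hg, ht⟩ | ⟨hg, ht⟩⟩
    · refine ⟨⟨m - 1 - j, by omega⟩, ⟨j, hj, Or.inl ⟨hg, rfl⟩⟩, Fin.ext ?_⟩
      rw [hf_true a j hj _ hg rfl]; omega
    · refine ⟨⟨m - j, by omega⟩, ⟨j, hj, Or.inr ⟨hg, rfl⟩⟩, Fin.ext ?_⟩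
      rw [hf_false a j hj _ hg rfl]; omega
  -- build the permutations
  have key : ∀ a : Fin n, ∃ σ : Equiv.Perm (Fin (m + 1)),
      ∀ k : Fin (m + 1), P a k → σ k = f a k := by
    intro a
    letI : DecidablePred (P a) := Classical.decPred _
    letI : DecidablePred (Q a) := Classical.decPred _
    have hbij : Function.Bijective (fun k : {x // P a x} => (⟨f a k.1, hfQ a k.1 k.2⟩ : {x // Q a x})) := by
      constructor
      · rintro ⟨k, hk⟩ ⟨k', hk'⟩ h
        exact Subtype.ext (hinj a k k' hk hk' (congrArg Subtype.val h))
      · rintro ⟨t, ht⟩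
        obtain ⟨k, hk, hfk⟩ := hsurjQ a t ht
        exact ⟨⟨k, hk⟩, Subtype.ext hfk⟩
    set e := Equiv.ofBijective _ hbij
    refine ⟨e.extendSubtype, fun k hk => ?_⟩
    rw [e.extendSubtype_apply_of_mem k hk]
    rfl
  choose σ hσ using key
  refine ⟨FreeGroup.lift σ, ?_⟩
  set g : Fin n × Bool → Equiv.Perm (Fin (m + 1)) :=
    fun x => cond x.2 (σ x.1) (σ x.1)⁻¹ with hg
  -- the letter action
  have hletter : ∀ j (hj : j < m),
      g (L.get ⟨j, hj⟩) ⟨m - 1 - j, by omega⟩ = ⟨m - j, by omega⟩ := by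
    intro j hj
    rcases hx : L.get ⟨j, hj⟩ with ⟨a, b⟩
    cases b
    · -- inverse letter
      simp only [hg, cond_false]
      rw [Equiv.Perm.inv_def, Equiv.symm_apply_eq]
      have hPk : P a ⟨m - j, by omega⟩ := ⟨j, hj, Or.inr ⟨hx, rfl⟩⟩
      rw [hσ a _ hPk]
      exact (Fin.ext (hf_false a j hj _ hx rfl)).symm
    · simp only [hg, cond_true]
      have hPk : P a ⟨m - 1 - j, by omega⟩ := ⟨j, hj, Or.inl ⟨hx, rfl⟩⟩
      rw [hσ a _ hPk]
      exact Fin.ext (hf_true a j hj _ hx rfl)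
  -- evaluating the word
  have hprod : ∀ (M : List (Fin n × Bool)) (j : ℕ), j ≤ m → M = L.drop j →
      ((M.map g).prod) ⟨0, by omega⟩ = ⟨m - j, by omega⟩ := by
    intro M
    induction M with
    | nil =>
      intro j hj hM
      have hlen := congrArg List.length hM
      simp only [List.length_nil, List.length_drop] at hlen
      have : j = m := by omega
      subst this
      simp [Fin.ext_iff]
    | cons c M' ih =>
      intro j hj hM
      have hjm : j < m := by
        by_contra h
        rw [List.drop_eq_nil_of_le (by omega)] at hM
        simp at hM
      have hdrop := List.drop_eq_getElem_cons (l := L) (i := j) (by omega)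
      rw [hdrop] at hM
      injection hM with hc hM'
      simp only [List.map_cons, List.prod_cons, Equiv.Perm.mul_apply]
      rw [ih (j + 1) (by omega) hM']
      have heq : (⟨m - (j + 1), by omega⟩ : Fin (m + 1)) = ⟨m - 1 - j, by omega⟩ :=
        Fin.ext (by simp only [Fin.val_mk]; omega)
      rw [heq, hc]
      exact hletter j hjm
  have hlift : FreeGroup.lift σ w = (L.map g).prod := by
    conv_lhs => rw [← FreeGroup.mk_toWord (x := w)]
    exact FreeGroup.lift_mk
  intro hcontra
  have h0 := hprod L 0 (by omega) (by simp)
  rw [← hlift, hcontra] at h0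
  simp only [Equiv.Perm.one_apply, Fin.ext_iff, Fin.val_mk] at h0
  omega

/-- Every surjective endomorphism of a finitely generated free group is an isomorphism. -/
theorem freeGroup_surjective_endomorphism_bijective
    (n : ℕ) (φ : FreeGroup (Fin n) →* FreeGroup (Fin n))
    (hsurj : Function.Surjective φ) :
    Function.Bijective φ := by
  refine ⟨?_, hsurj⟩
  rw [injective_iff_map_eq_one]
  intro g hg
  by_contra hg1
  obtain ⟨m, π, hπ⟩ := freeGroup_res_finite n g hg1
  have hfin : Finite (FreeGroup (Fin n) →* Equiv.Perm (Fin (m + 1))) :=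
    Finite.of_equiv _ FreeGroup.lift
  have hTinj : Function.Injective
      (fun ψ : FreeGroup (Fin n) →* Equiv.Perm (Fin (m + 1)) => ψ.comp φ) := by
    intro ψ ψ' h
    apply MonoidHom.ext
    intro z
    obtain ⟨y, rfl⟩ := hsurj z
    exact DFunLike.congr_fun h y
  obtain ⟨ψ, hψ⟩ := Finite.injective_iff_surjective.mp hTinj π
  apply hπ
  calc π g = ψ (φ g) := by rw [← hψ]; rfl
    _ = 1 := by rw [hg]; simp
end

section
/- Let F be a group and N a normal subgroup of F contained in the commutator subgroup [F,F]. Write G = F/N and let π : F → G be the quotient map. Then π induces a group isomorphism from F₂/(F₃ · N) onto G₂/G₃, where F₂ = [F,F], F₃ = [F,[F,F]], G₂ = [G,G], G₃ = [G,[G,G]], and F₃ · N denotes the subgroup of F₂ generated by F₃ and N (which is normal in F₂, indeed in F). -/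
theorem map_lcs_of_surjective' {F H : Type*} [Group F] [Group H] (f : F →* H)
    (hf : Function.Surjective f) (n : ℕ) :
    ((⊤ : Subgroup F).lowerCentralSeries n).map f = (⊤ : Subgroup H).lowerCentralSeries n := by
  induction n with
  | zero =>
    simpa [Subgroup.lowerCentralSeries] using Subgroup.map_top_of_surjective f hf
  | succ n ih =>
    show Subgroup.map f ⁅(⊤ : Subgroup F).lowerCentralSeries n, ⊤⁆ = ⁅(⊤ : Subgroup H).lowerCentralSeries n, ⊤⁆
    rw [Subgroup.map_commutator, ih, Subgroup.map_top_of_surjective f hf]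

/-- Let `N` be a normal subgroup of a group `F` contained in the commutator subgroup
`F₂ = [F,F]`, and set `G = F/N` with quotient map `π`. Then `π` induces an isomorphism
`F₂/(F₃·N) ≃ G₂/G₃`, where `F₂, F₃` (resp. `G₂, G₃`) are the second and third terms of the
lower central series of `F` (resp. `G`). -/
theorem quotient_commutator_iso_of_le_commutator
    {F : Type*} [Group F] (N : Subgroup F) [N.Normal]
    (hN : N ≤ (⊤ : Subgroup F).lowerCentralSeries 1) :
    ∃ e : ((⊤ : Subgroup F).lowerCentralSeries 1 ⧸
            ((⊤ : Subgroup F).lowerCentralSeries 2 ⊔ N).subgroupOf ((⊤ : Subgroup F).lowerCentralSeries 1)) ≃*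
          ((⊤ : Subgroup (F ⧸ N)).lowerCentralSeries 1 ⧸
            ((⊤ : Subgroup (F ⧸ N)).lowerCentralSeries 2).subgroupOf ((⊤ : Subgroup (F ⧸ N)).lowerCentralSeries 1)),
      ∀ (x : F) (hx : x ∈ (⊤ : Subgroup F).lowerCentralSeries 1)
        (hx' : (QuotientGroup.mk' N) x ∈ (⊤ : Subgroup (F ⧸ N)).lowerCentralSeries 1),
        e (QuotientGroup.mk ⟨x, hx⟩) = QuotientGroup.mk ⟨(QuotientGroup.mk' N) x, hx'⟩ := by
  set π := QuotientGroup.mk' N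
  have hπ : Function.Surjective π := QuotientGroup.mk_surjective
  have h1 : ((⊤ : Subgroup F).lowerCentralSeries 1).map π = (⊤ : Subgroup (F ⧸ N)).lowerCentralSeries 1 :=
    map_lcs_of_surjective' π hπ 1
  have h2 : ((⊤ : Subgroup F).lowerCentralSeries 2).map π = (⊤ : Subgroup (F ⧸ N)).lowerCentralSeries 2 :=
    map_lcs_of_surjective' π hπ 2
  have hmem : ∀ x : (⊤ : Subgroup F).lowerCentralSeries 1, π x ∈ (⊤ : Subgroup (F ⧸ N)).lowerCentralSeries 1 := by
    intro x
    rw [← h1]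
    exact ⟨x, x.2, rfl⟩
  let g : ((⊤ : Subgroup F).lowerCentralSeries 1) →* ((⊤ : Subgroup (F ⧸ N)).lowerCentralSeries 1) :=
    (π.comp ((⊤ : Subgroup F).lowerCentralSeries 1).subtype).codRestrict _ hmem
  let f := (QuotientGroup.mk'
      (((⊤ : Subgroup (F ⧸ N)).lowerCentralSeries 2).subgroupOf ((⊤ : Subgroup (F ⧸ N)).lowerCentralSeries 1))).comp g
  have hfsurj : Function.Surjective f := by
    intro y
    obtain ⟨z, rfl⟩ := QuotientGroup.mk_surjective y
    have hz : (z : F ⧸ N) ∈ ((⊤ : Subgroup F).lowerCentralSeries 1).map π := by rw [h1]; exact z.2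
    obtain ⟨w, hw, hwz⟩ := hz
    refine ⟨⟨w, hw⟩, ?_⟩
    show QuotientGroup.mk (g ⟨w, hw⟩) = QuotientGroup.mk z
    congr 1
    exact Subtype.ext hwz
  have hker : f.ker = ((⊤ : Subgroup F).lowerCentralSeries 2 ⊔ N).subgroupOf ((⊤ : Subgroup F).lowerCentralSeries 1) := by
    ext x
    have : π x ∈ (⊤ : Subgroup (F ⧸ N)).lowerCentralSeries 2 ↔
        (x : F) ∈ (⊤ : Subgroup F).lowerCentralSeries 2 ⊔ N := by
      rw [← h2]
      constructor
      · intro hx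
        have := Subgroup.mem_comap.mpr hx
        rw [Subgroup.comap_map_eq, QuotientGroup.ker_mk'] at this
        exact this
      · intro hx
        have : (x : F) ∈ Subgroup.comap π (((⊤ : Subgroup F).lowerCentralSeries 2).map π) := by
          rw [Subgroup.comap_map_eq, QuotientGroup.ker_mk']
          exact hx
        exact this
    simp only [MonoidHom.mem_ker, f, MonoidHom.comp_apply, QuotientGroup.mk'_apply,
      QuotientGroup.eq_one_iff, Subgroup.mem_subgroupOf]
    exact this
  refine ⟨(QuotientGroup.quotientMulEquivOfEq hker.symm).trans
    (QuotientGroup.quotientKerEquivOfSurjective f hfsurj), ?_⟩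
  intro x hx hx'
  rfl
end

section
/- Let G be a group generated by a set S (i.e., the subgroup closure of S is all of G). Then the commutator subgroup G₂ = [G,G] equals the join of G₃ = [G,[G,G]] with the subgroup generated by all commutators ⁅x,y⁆ with x, y ∈ S; equivalently, the quotient G₂/G₃ is generated by the images of the commutators ⁅x,y⁆ of pairs of generators. -/
open scoped commutatorElement

/-- If a group `G` is generated by a set `S`, then the commutator subgroup `G₂ = [G,G]` is the
join of `G₃ = [G,[G,G]]` with the subgroup generated by the commutators `⁅x,y⁆` of pairs of
generators; equivalently, `G₂/G₃` is generated by the images of the `⁅x,y⁆`, `x, y ∈ S`. -/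
theorem commutator_eq_lcs_sup_closure_commutators_of_generators
    {G : Type*} [Group G] (S : Set G) (hS : Subgroup.closure S = ⊤) :
    (⊤ : Subgroup G).lowerCentralSeries 1 =
      (⊤ : Subgroup G).lowerCentralSeries 2 ⊔
        Subgroup.closure {c : G | ∃ x ∈ S, ∃ y ∈ S, c = ⁅x, y⁆} := by
  set K := (⊤ : Subgroup G).lowerCentralSeries 2 ⊔
      Subgroup.closure {c : G | ∃ x ∈ S, ∃ y ∈ S, c = ⁅x, y⁆} with hK
  -- commutators of arbitrary elements lie in G₂
  have h2 : ∀ a b : G, ⁅a, b⁆ ∈ (⊤ : Subgroup G).lowerCentralSeries 1 := fun a b =>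
    Subgroup.commutator_mem_commutator (Subgroup.mem_top a) (Subgroup.mem_top b)
  -- commutators with one entry in G₂ lie in G₃ ≤ K
  have h3 : ∀ p q : G, p ∈ (⊤ : Subgroup G).lowerCentralSeries 1 → ⁅p, q⁆ ∈ (⊤ : Subgroup G).lowerCentralSeries 2 :=
    fun p q hp => Subgroup.commutator_mem_commutator hp (Subgroup.mem_top q)
  have h3' : ∀ p q : G, q ∈ (⊤ : Subgroup G).lowerCentralSeries 1 → ⁅p, q⁆ ∈ (⊤ : Subgroup G).lowerCentralSeries 2 :=
    fun p q hq => by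
      have := ((⊤ : Subgroup G).lowerCentralSeries 2).inv_mem (h3 q p hq)
      rwa [commutatorElement_inv] at this
  -- conjugation preserves K on elements of G₂ ∩ K
  have hconj : ∀ g h : G, h ∈ K → h ∈ (⊤ : Subgroup G).lowerCentralSeries 1 → g * h * g⁻¹ ∈ K := by
    intro g h hK2 h2h
    have : g * h * g⁻¹ = ⁅g, h⁆ * h := by group
    rw [this]
    exact mul_mem (le_sup_left (α := Subgroup G) (h3' g h h2h)) hK2
  -- step 1 : commutators of a generator with anything lie in K
  have step1 : ∀ x ∈ S, ∀ b : G, ⁅x, b⁆ ∈ K := by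
    intro x hx b
    have hb : b ∈ Subgroup.closure S := by rw [hS]; exact Subgroup.mem_top b
    induction hb using Subgroup.closure_induction with
    | mem y hy =>
      exact le_sup_right (α := Subgroup G)
        (Subgroup.subset_closure ⟨x, hx, y, hy, rfl⟩)
    | one => simpa using one_mem K
    | mul b c _ _ hb hc =>
      have : ⁅x, b * c⁆ = ⁅x, b⁆ * (b * ⁅x, c⁆ * b⁻¹) := by group
      rw [this]
      exact mul_mem hb (hconj b _ hc (h2 x c))
    | inv b _ hb =>
      have : ⁅x, b⁻¹⁆ = b⁻¹ * ⁅x, b⁆⁻¹ * b := by group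
      rw [this]
      have := hconj b⁻¹ ⁅x, b⁆⁻¹ (inv_mem hb) (inv_mem (h2 x b))
      simpa using this
  -- step 2 : all commutators lie in K
  have step2 : ∀ a b : G, ⁅a, b⁆ ∈ K := by
    intro a
    have ha : a ∈ Subgroup.closure S := by rw [hS]; exact Subgroup.mem_top a
    induction ha using Subgroup.closure_induction with
    | mem x hx => exact step1 x hx
    | one => intro b; simpa using one_mem K
    | mul a c _ _ hia hic =>
      intro b
      have : ⁅a * c, b⁆ = (a * ⁅c, b⁆ * a⁻¹) * ⁅a, b⁆ := by group
      rw [this]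
      exact mul_mem (hconj a _ (hic b) (h2 c b)) (hia b)
    | inv a _ hia =>
      intro b
      have : ⁅a⁻¹, b⁆ = a⁻¹ * ⁅a, b⁆⁻¹ * a := by group
      rw [this]
      have := hconj a⁻¹ ⁅a, b⁆⁻¹ (inv_mem (hia b)) (inv_mem (h2 a b))
      simpa using this
  apply le_antisymm
  · show (⁅(⊤ : Subgroup G), ⊤⁆ : Subgroup G) ≤ K
    exact Subgroup.commutator_le.mpr fun a _ b _ => step2 a b
  · refine sup_le (Subgroup.lowerCentralSeries_antitone ⊤ (by norm_num)) ?_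
    rw [Subgroup.closure_le]
    rintro c ⟨x, hx, y, hy, rfl⟩
    exact h2 x y
end

section
/- Let F be a free group (F = FreeGroup α for some type α) and let a, b, c ∈ F. If a and b do not commute (⁅a,b⁆ ≠ 1) and c commutes with both a and b (c·a = a·c and c·b = b·c), then c = 1. -/
open Subgroup

open scoped commutatorElement

/-- Distinct generators of a free group do not commute. -/
lemma aux_gen_commute {G : Type*} [Group G] [IsFreeGroup G]
    {u v : IsFreeGroup.Generators G}
    (h : Commute (IsFreeGroup.of u) (IsFreeGroup.of v)) : u = v := by
  classical
  by_contra hne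
  set c₁ : Equiv.Perm (Fin 3) := Equiv.swap 0 1 with hc₁
  set c₂ : Equiv.Perm (Fin 3) := Equiv.swap 1 2 with hc₂
  set f : IsFreeGroup.Generators G → Equiv.Perm (Fin 3) :=
    fun w => if w = u then c₁ else if w = v then c₂ else 1 with hf
  have h1 : IsFreeGroup.lift f (IsFreeGroup.of u) = c₁ := by
    rw [IsFreeGroup.lift_of]; simp [hf]
  have h2 : IsFreeGroup.lift f (IsFreeGroup.of v) = c₂ := by
    rw [IsFreeGroup.lift_of]; simp [hf, Ne.symm hne]
  have := h.map (IsFreeGroup.lift f)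
  rw [h1, h2] at this
  have : c₁ * c₂ = c₂ * c₁ := this
  rw [hc₁, hc₂] at this
  exact absurd this (by decide)

/-- The generators of a free group generate it. -/
lemma aux_closure_range {G : Type*} [Group G] [IsFreeGroup G] :
    Subgroup.closure (Set.range (IsFreeGroup.of : IsFreeGroup.Generators G → G)) = ⊤ := by
  have hof : Set.range (IsFreeGroup.of : IsFreeGroup.Generators G → G)
      = (IsFreeGroup.mulEquiv G) '' Set.range (FreeGroup.of) := by
    rw [← Set.range_comp]
    rfl
  rw [hof]
  have hmc := (MonoidHom.map_closure ((IsFreeGroup.mulEquiv G).toMonoidHom)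
    (Set.range (FreeGroup.of : IsFreeGroup.Generators G → FreeGroup _))).symm
  simp only [MulEquiv.coe_toMonoidHom] at hmc
  rw [hmc, FreeGroup.closure_range_of]
  exact Subgroup.map_top_of_surjective _ (IsFreeGroup.mulEquiv G).surjective

/-- A free group with subsingleton generator type is cyclic. -/
lemma aux_cyclic {G : Type*} [Group G] [IsFreeGroup G]
    (hs : Subsingleton (IsFreeGroup.Generators G)) :
    ∃ g : G, ∀ x : G, x ∈ Subgroup.zpowers g := by
  rcases isEmpty_or_nonempty (IsFreeGroup.Generators G) with he | ⟨⟨u⟩⟩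
  · refine ⟨1, fun x => ?_⟩
    have : Set.range (IsFreeGroup.of : IsFreeGroup.Generators G → G) = ∅ :=
      Set.range_eq_empty _
    have htop := aux_closure_range (G := G)
    rw [this, Subgroup.closure_empty] at htop
    have : x ∈ (⊥ : Subgroup G) := htop ▸ Subgroup.mem_top x
    rw [Subgroup.mem_bot] at this
    simp [this]
  · refine ⟨IsFreeGroup.of u, fun x => ?_⟩
    have : Set.range (IsFreeGroup.of : IsFreeGroup.Generators G → G) = {IsFreeGroup.of u} := by
      apply Set.eq_singleton_iff_unique_mem.2
      exact ⟨⟨u, rfl⟩, by rintro _ ⟨w, rfl⟩; rw [Subsingleton.elim w u]⟩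
    have htop := aux_closure_range (G := G)
    rw [this, ← Subgroup.zpowers_eq_closure] at htop
    exact htop ▸ Subgroup.mem_top x

/-- In a free group, two commuting elements are powers of a common element. -/
lemma aux_commute_powers {α : Type*} {x y : FreeGroup α} (h : Commute x y) :
    ∃ (g : FreeGroup α) (m n : ℤ), x = g ^ m ∧ y = g ^ n := by
  set H : Subgroup (FreeGroup α) := Subgroup.closure {x, y} with hH
  have hxH : x ∈ H := Subgroup.subset_closure (by simp)
  have hyH : y ∈ H := Subgroup.subset_closure (by simp)
  -- H is abelian
  have hcomm1 : ∀ z ∈ H, Commute z x ∧ Commute z y := by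
    intro z hz
    induction hz using Subgroup.closure_induction with
    | mem w hw =>
      rcases hw with rfl | hw
      · exact ⟨Commute.refl _, h⟩
      · rw [Set.mem_singleton_iff] at hw
        subst hw
        exact ⟨h.symm, Commute.refl _⟩
    | one => exact ⟨Commute.one_left _, Commute.one_left _⟩
    | mul p q _ _ hp hq => exact ⟨hp.1.mul_left hq.1, hp.2.mul_left hq.2⟩
    | inv p _ hp => exact ⟨hp.1.inv_left, hp.2.inv_left⟩
  have hcomm : ∀ z ∈ H, ∀ w ∈ H, Commute z w := by
    intro z hz w hw
    induction hw using Subgroup.closure_induction with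
    | mem p hp =>
      rcases hp with rfl | hp
      · exact (hcomm1 z hz).1
      · rw [Set.mem_singleton_iff] at hp
        subst hp
        exact (hcomm1 z hz).2
    | one => exact Commute.one_right _
    | mul p q _ _ hp hq => exact hp.mul_right hq
    | inv p _ hp => exact hp.inv_right
  -- hence generators of H commute, so H is cyclic
  have hs : Subsingleton (IsFreeGroup.Generators H) := by
    constructor
    intro u v
    apply aux_gen_commute (G := H)
    have hu := (IsFreeGroup.of u : H).2
    have hv := (IsFreeGroup.of v : H).2
    have := hcomm _ hu _ hv
    unfold Commute SemiconjBy at this ⊢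
    exact Subtype.ext (by push_cast; exact this)
  obtain ⟨g, hg⟩ := aux_cyclic hs
  obtain ⟨m, hm⟩ := Subgroup.mem_zpowers_iff.1 (hg ⟨x, hxH⟩)
  obtain ⟨n, hn⟩ := Subgroup.mem_zpowers_iff.1 (hg ⟨y, hyH⟩)
  refine ⟨(g : FreeGroup α), m, n, ?_, ?_⟩
  · have := congrArg (Subtype.val) hm
    push_cast at this
    exact this.symm
  · have := congrArg (Subtype.val) hn
    push_cast at this
    exact this.symm

/-- In a free group, if nontrivial powers coincide, the bases commute. -/
lemma aux_common_power_commute {α : Type*} {g h : FreeGroup α} {m n : ℤ}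
    (hm : m ≠ 0) (heq : g ^ m = h ^ n) : Commute g h := by
  classical
  set M : Subgroup (FreeGroup α) := Subgroup.closure {g, h} with hM
  have hgM : g ∈ M := Subgroup.subset_closure (by simp)
  have hhM : h ∈ M := Subgroup.subset_closure (by simp)
  set gM : M := ⟨g, hgM⟩
  set hM' : M := ⟨h, hhM⟩
  have hrel : gM ^ m = hM' ^ n := by
    apply Subtype.ext
    push_cast
    exact heq
  -- the abelianization map over ℚ
  set β := IsFreeGroup.Generators M with hβ
  set χ : M →* Multiplicative (β →₀ ℚ) :=
    IsFreeGroup.lift (fun w => Multiplicative.ofAdd (Finsupp.single w (1 : ℚ))) with hχ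
  set G₀ : β →₀ ℚ := Multiplicative.toAdd (χ gM) with hG₀
  set H₀ : β →₀ ℚ := Multiplicative.toAdd (χ hM') with hH₀
  have hrel' : (m : ℚ) • G₀ = (n : ℚ) • H₀ := by
    have := congrArg (fun z => Multiplicative.toAdd (χ z)) hrel
    simp only [map_zpow, toAdd_zpow] at this
    rw [Int.cast_smul_eq_zsmul, Int.cast_smul_eq_zsmul]
    exact this
  have hGspan : G₀ ∈ Submodule.span ℚ ({H₀} : Set (β →₀ ℚ)) := by
    rw [Submodule.mem_span_singleton]
    refine ⟨(m : ℚ)⁻¹ * n, ?_⟩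
    rw [mul_smul, ← hrel', smul_smul, inv_mul_cancel₀ (by exact_mod_cast hm), one_smul]
  have hHspan : H₀ ∈ Submodule.span ℚ ({H₀} : Set (β →₀ ℚ)) :=
    Submodule.mem_span_singleton_self _
  -- every element of M maps into the span of H₀
  have hall : ∀ z : M, Multiplicative.toAdd (χ z) ∈ Submodule.span ℚ ({H₀} : Set (β →₀ ℚ)) := by
    intro z
    have hz : z ∈ Subgroup.closure (((↑) : M → FreeGroup α) ⁻¹' {g, h}) := by
      rw [Subgroup.closure_closure_coe_preimage]; trivial
    induction hz using Subgroup.closure_induction with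
    | mem w hw =>
      rcases hw with hw | hw
      · have : w = gM := Subtype.ext hw
        rw [this]; exact hGspan
      · have : w = hM' := Subtype.ext hw
        rw [this]; exact hHspan
    | one => simp only [map_one, toAdd_one]; exact Submodule.zero_mem _
    | mul p q _ _ hp hq => rw [map_mul, toAdd_mul]; exact Submodule.add_mem _ hp hq
    | inv p _ hp => rw [map_inv, toAdd_inv]; exact Submodule.neg_mem _ hp
  -- generators of M are subsingleton
  have hs : Subsingleton β := by
    constructor
    intro u v
    by_contra hne
    have hu := hall (IsFreeGroup.of u)
    have hv := hall (IsFreeGroup.of v)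
    rw [hχ] at hu hv
    rw [IsFreeGroup.lift_of] at hu hv
    simp only [toAdd_ofAdd] at hu hv
    rw [Submodule.mem_span_singleton] at hu hv
    obtain ⟨q, hq⟩ := hu
    obtain ⟨r, hr⟩ := hv
    have hqu := DFunLike.congr_fun hq u
    have hqv := DFunLike.congr_fun hq v
    have hru := DFunLike.congr_fun hr u
    have hrv := DFunLike.congr_fun hr v
    simp only [Finsupp.coe_smul, Pi.smul_apply, smul_eq_mul, Finsupp.single_eq_same,
      Finsupp.single_eq_of_ne hne, Finsupp.single_eq_of_ne (Ne.symm hne)] at hqu hqv hru hrv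
    -- q * H₀ u = 1, r * H₀ u = 0, r * H₀ v = 1, q * H₀ v = 0
    have hHu : H₀ u ≠ 0 := fun h0 => by rw [h0, mul_zero] at hqu; exact one_ne_zero hqu.symm
    have hr0 : r = 0 := by
      rcases mul_eq_zero.1 hru with h0 | h0
      · exact h0
      · exact absurd h0 hHu
    rw [hr0, zero_mul] at hrv
    exact one_ne_zero hrv.symm
  obtain ⟨g₀, hg₀⟩ := aux_cyclic (G := M) hs
  obtain ⟨i, hi⟩ := Subgroup.mem_zpowers_iff.1 (hg₀ gM)
  obtain ⟨j, hj⟩ := Subgroup.mem_zpowers_iff.1 (hg₀ hM')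
  have : Commute gM hM' := by rw [← hi, ← hj]; exact Commute.zpow_zpow_self g₀ i j
  have := congrArg Subtype.val this.eq
  push_cast at this
  exact this

/-- In a free group, an element commuting with two non-commuting elements is trivial. -/
theorem freeGroup_eq_one_of_commutes_with_noncommuting
    {α : Type*} (a b c : FreeGroup α)
    (hab : ⁅a, b⁆ ≠ 1) (hca : c * a = a * c) (hcb : c * b = b * c) :
    c = 1 := by
  by_contra hc
  apply hab
  rw [commutatorElement_eq_one_iff_commute]
  obtain ⟨g, k, m, hak, hcm⟩ := aux_commute_powers (x := a) (y := c) hca.symm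
  obtain ⟨h, l, n, hbl, hcn⟩ := aux_commute_powers (x := b) (y := c) hcb.symm
  have hm : m ≠ 0 := by rintro rfl; exact hc (by rw [hcm, zpow_zero])
  have hgh : Commute g h := aux_common_power_commute hm (by rw [← hcm, ← hcn])
  rw [hak, hbl]
  exact (hgh.zpow_zpow k l)
end

section
/- Let F = FreeGroup α be a free group on a type α, let k ∈ α, let j₁, …, j_q ∈ α be pairwise distinct elements, and let t₁, …, t_q ∈ ℤ. If the commutator ⁅FreeGroup.of k, (FreeGroup.of j₁)^{t₁} · (FreeGroup.of j₂)^{t₂} ⋯ (FreeGroup.of j_q)^{t_q}⁆ lies in F₃ = [F,[F,F]], then t_i = 0 for every i with j_i ≠ k. -/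
open scoped commutatorElement

structure Heis where
  a : ℤ
  b : ℤ
  c : ℤ

namespace Heis

@[ext] lemma ext' {x y : Heis} (ha : x.a = y.a) (hb : x.b = y.b) (hc : x.c = y.c) : x = y := by
  cases x; cases y; simp_all

instance : Mul Heis := ⟨fun x y => ⟨x.a + y.a, x.b + y.b, x.c + y.c + x.a * y.b⟩⟩
instance : One Heis := ⟨⟨0, 0, 0⟩⟩
instance : Inv Heis := ⟨fun x => ⟨-x.a, -x.b, x.a * x.b - x.c⟩⟩

@[simp] lemma mul_def (x y : Heis) :
    x * y = ⟨x.a + y.a, x.b + y.b, x.c + y.c + x.a * y.b⟩ := rfl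
@[simp] lemma inv_def (x : Heis) : x⁻¹ = ⟨-x.a, -x.b, x.a * x.b - x.c⟩ := rfl
@[simp] lemma one_def : (1 : Heis) = ⟨0, 0, 0⟩ := rfl

instance : Group Heis where
  mul_assoc x y z := by ext <;> simp <;> ring
  one_mul x := by ext <;> simp
  mul_one x := by ext <;> simp
  inv_mul_cancel x := by ext <;> simp [mul_comm]
  div_eq_mul_inv x y := rfl
  zpow := zpowRec
  npow := npowRec

/-- first coordinate hom -/
def aHom : Heis →* Multiplicative ℤ where
  toFun x := Multiplicative.ofAdd x.a
  map_one' := rfl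
  map_mul' x y := by simp [← ofAdd_add]

/-- second coordinate hom -/
def bHom : Heis →* Multiplicative ℤ where
  toFun x := Multiplicative.ofAdd x.b
  map_one' := rfl
  map_mul' x y := by simp [← ofAdd_add]

@[simp] lemma aHom_apply (x : Heis) : aHom x = Multiplicative.ofAdd x.a := rfl
@[simp] lemma bHom_apply (x : Heis) : bHom x = Multiplicative.ofAdd x.b := rfl

lemma comm_central (g h : Heis) : ⁅g, h⁆ = ⟨0, 0, g.a * h.b - g.b * h.a⟩ := by
  show g * h * g⁻¹ * h⁻¹ = _
  ext <;> simp <;> ring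

lemma lcs_one_coords {g : Heis} (hg : g ∈ Subgroup.lowerCentralSeries (⊤ : Subgroup Heis) 1) :
    g.a = 0 ∧ g.b = 0 := by
  have key : ∀ (φ : Heis →* Multiplicative ℤ), φ g = 1 := by
    intro φ
    have : Subgroup.lowerCentralSeries (⊤ : Subgroup Heis) 1 ≤ φ.ker := by
      show ⁅(⊤ : Subgroup Heis), ⊤⁆ ≤ _
      rw [Subgroup.commutator_le]
      intro p _ r _
      simp only [MonoidHom.mem_ker, map_commutatorElement]
      exact commutatorElement_eq_one_iff_commute.mpr (mul_comm _ _)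
    simpa [MonoidHom.mem_ker] using this hg
  constructor
  · simpa using congrArg Multiplicative.toAdd (key aHom)
  · simpa using congrArg Multiplicative.toAdd (key bHom)

lemma lcs_two : Subgroup.lowerCentralSeries (⊤ : Subgroup Heis) 2 = ⊥ := by
  rw [eq_bot_iff]
  show ⁅Subgroup.lowerCentralSeries (⊤ : Subgroup Heis) 1, ⊤⁆ ≤ ⊥
  rw [Subgroup.commutator_le]
  intro g hg x _
  obtain ⟨ha, hb⟩ := lcs_one_coords hg
  simp [Subgroup.mem_bot, comm_central, ha, hb]

end Heis

/-- In a free group `F = FreeGroup α`, if `k ∈ α`, `j₁, …, j_q ∈ α` are pairwise distinct,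
and `⁅of k, (of j₁)^{t₁} ⋯ (of j_q)^{t_q}⁆ ∈ F₃ = [F,[F,F]]`, then `t_i = 0` for every `i`
with `j_i ≠ k`. -/
theorem exponents_eq_zero_of_commutator_mem_lcs_two
    {α : Type*} (k : α) (q : ℕ) (j : Fin q → α) (hj : Function.Injective j)
    (t : Fin q → ℤ)
    (h : ⁅FreeGroup.of k,
        (List.ofFn fun i : Fin q => (FreeGroup.of (j i)) ^ (t i)).prod⁆ ∈
      Subgroup.lowerCentralSeries (⊤ : Subgroup (FreeGroup α)) 2) :
    ∀ i : Fin q, j i ≠ k → t i = 0 := by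
  intro i hik
  classical
  set f : α → Heis := fun a => if a = k then ⟨1,0,0⟩ else if a = j i then ⟨0,1,0⟩ else 1 with hf
  set φ := FreeGroup.lift f with hφ
  set w := (List.ofFn fun m : Fin q => (FreeGroup.of (j m)) ^ (t m)).prod with hw
  have h1 : φ ⁅FreeGroup.of k, w⁆ = 1 := by
    have hm : φ ⁅FreeGroup.of k, w⁆ ∈ Subgroup.map φ (Subgroup.lowerCentralSeries (⊤ : Subgroup (FreeGroup α)) 2) :=
      ⟨_, h, rfl⟩
    simpa [Subgroup.mem_bot] using
      (Subgroup.lowerCentralSeries.map φ 2).trans (le_of_eq Heis.lcs_two) hm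
  have hφk : φ (FreeGroup.of k) = ⟨1,0,0⟩ := by simp [hφ, hf]
  have hcomm : φ ⁅FreeGroup.of k, w⁆ = ⟨0, 0, (φ w).b⟩ := by
    rw [map_commutatorElement, hφk, Heis.comm_central]
    simp
  have hb0 : (φ w).b = 0 := by
    rw [hcomm] at h1
    simpa using congrArg Heis.c h1
  have key : Heis.bHom (φ w) = Multiplicative.ofAdd (t i) := by
    have : Heis.bHom (φ w) = (Heis.bHom.comp φ) w := rfl
    rw [this, hw, map_list_prod, List.map_ofFn]
    have step : ∀ m : Fin q, (Heis.bHom.comp φ) ((FreeGroup.of (j m)) ^ (t m))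
        = Multiplicative.ofAdd (if m = i then t i else 0) := by
      intro m
      rw [map_zpow, MonoidHom.comp_apply, hφ, FreeGroup.lift_apply_of]
      by_cases hmk : j m = k
      · have hmi : m ≠ i := fun e => hik (e ▸ hmk)
        simp [hf, hmk, hmi]
      · by_cases hmi : m = i
        · subst hmi
          simp only [hf, if_neg hmk, if_pos rfl, Heis.bHom_apply, if_pos rfl]
          rw [← ofAdd_zsmul]
          simp
        · have hne : j m ≠ j i := fun e => hmi (hj e)
          simp [hf, hmk, hne, hmi]
    calc (List.ofFn fun m => (Heis.bHom.comp φ) ((FreeGroup.of (j m)) ^ (t m))).prod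
        = (List.ofFn fun m : Fin q => Multiplicative.ofAdd (if m = i then t i else 0)).prod := by
          rw [funext step]
      _ = Multiplicative.ofAdd (∑ m : Fin q, if m = i then t i else 0) := by
          rw [List.prod_ofFn, ofAdd_sum]
      _ = Multiplicative.ofAdd (t i) := by simp
  have hf2 : (φ w).b = t i := by
    simpa using congrArg Multiplicative.toAdd key
  rw [hb0] at hf2
  exact hf2.symm
end
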